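/- Fix ε > 0 and η > 0, and let (p_n) be a sequence with √((2+ε)·(log n)/n) ≤ p_n < 1/2 and 2·p_n·e^{1−2p_n} ≤ 1 − (2+η)·(log n)/n for all large n. Let S_n be the number of Seymour vertices of the random digraph D(n,p_n). Then n − E(S_n) → 0 as n → ∞; that is, E(S_n) = n − o(1). -/

import Mathlib

/-! Model of the random digraph `D(n, p)` on vertex set `Fin n`:  a sample point assigns a
Boolean to every ordered pair of vertices, and the arc `u → v` (for `u ≠ v`) is present iff
the Boolean at `(u, v)` is `true`.  The probability of a sample point is the product, over
ordered pairs of distinct vertices, of `p` for each present arc and `1 − p` for each absent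
arc (the unused diagonal coordinates are forced to be `false`), so that the arcs are
independent and each is present with probability `p`. -/

/-- The sample space of the random digraph on `n` vertices. -/
abbrev DOmega (n : ℕ) := Fin n → Fin n → Bool

/-- `dadj ω u v` : the arc `u → v` is present in the digraph coded by `ω`. -/
def dadj {n : ℕ} (ω : DOmega n) (u v : Fin n) : Prop :=
  u ≠ v ∧ ω u v = true

/-- The probability weight of the sample point `ω` in the model `D(n, p)`. -/
noncomputable def dwt {n : ℕ} (p : ℝ) (ω : DOmega n) : ℝ :=
  ∏ u : Fin n, ∏ v : Fin n,
    if u = v then (if ω u v then 0 else 1) else (if ω u v then p else 1 - p)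

/-- Probability of an event in the random digraph model `D(n, p)`. -/
noncomputable def dPr {n : ℕ} (p : ℝ) (E : Set (DOmega n)) : ℝ :=
  ∑ ω : DOmega n, E.indicator (dwt p) ω

/-- Expectation of a random variable in the random digraph model `D(n, p)`. -/
noncomputable def dEx {n : ℕ} (p : ℝ) (f : DOmega n → ℝ) : ℝ :=
  ∑ ω : DOmega n, dwt p ω * f ω

/-- The first out-neighborhood of `v`: vertices at directed distance exactly 1. -/
def dN1 {n : ℕ} (ω : DOmega n) (v : Fin n) : Set (Fin n) := {w | dadj ω v w}

/-- The second out-neighborhood of `v`: vertices at directed distance exactly 2. -/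
def dN2 {n : ℕ} (ω : DOmega n) (v : Fin n) : Set (Fin n) :=
  {w | w ≠ v ∧ ¬ dadj ω v w ∧ ∃ x, dadj ω v x ∧ dadj ω x w}

/-- `v` is a Seymour vertex of the digraph coded by `ω`. -/
def dSeymour {n : ℕ} (ω : DOmega n) (v : Fin n) : Prop :=
  (dN1 ω v).ncard ≤ (dN2 ω v).ncard

/-- The number of Seymour vertices. -/
noncomputable def dS {n : ℕ} (ω : DOmega n) : ℕ := {v | dSeymour ω v}.ncard

/-- The expected number of Seymour vertices of `D(n, p)`. -/
noncomputable def dES (n : ℕ) (p : ℝ) : ℝ := dEx p (fun ω : DOmega n => (dS ω : ℝ))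



open Finset


/-- master factorization -/
lemma dmaster {n : ℕ} (g : Fin n → Fin n → Bool → ℝ) :
    ∑ ω : DOmega n, ∏ u, ∏ v, g u v (ω u v)
      = ∏ u, ∏ v, (g u v true + g u v false) := by
  have h1 : ∀ (α : Type) [Fintype α] [DecidableEq α] (κ : Type) [Fintype κ]
      (g : α → κ → ℝ), ∑ f : α → κ, ∏ a, g a (f a) = ∏ a, ∑ k, g a k := by
    intro α _ _ κ _ g
    rw [Finset.prod_univ_sum (fun _ => (univ : Finset κ)) g, ← Fintype.piFinset_univ]
  rw [h1 (Fin n) (Fin n → Bool) (fun u row => ∏ v, g u v (row v))]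
  refine Finset.prod_congr rfl fun u _ => ?_
  rw [h1 (Fin n) Bool (fun v b => g u v b)]
  exact Finset.prod_congr rfl fun v _ => Fintype.sum_bool _

lemma dwt_nonneg {n : ℕ} {p : ℝ} (h0 : 0 ≤ p) (h1 : p ≤ 1) (ω : DOmega n) :
    0 ≤ dwt p ω := by
  apply Finset.prod_nonneg; intro u _; apply Finset.prod_nonneg; intro v _
  split_ifs <;> norm_num <;> linarith

lemma sum_dwt {n : ℕ} {p : ℝ} : ∑ ω : DOmega n, dwt p ω = 1 := by
  unfold dwt
  rw [dmaster (fun u v b => if u = v then (if b then 0 else 1) else (if b then p else 1 - p))]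
  apply Finset.prod_eq_one; intro u _; apply Finset.prod_eq_one; intro v _
  by_cases h : u = v <;> simp [h] <;> ring

def cylEvent {n : ℕ} (v : Fin n) (A T : Finset (Fin n)) : Set (DOmega n) :=
  {ω | (∀ w, w ≠ v → ω v w = decide (w ∈ A)) ∧ ∀ w ∈ T, ∀ x ∈ A, ω x w = false}

noncomputable def cylG {n : ℕ} (p : ℝ) (v : Fin n) (A T : Finset (Fin n))
    (u w : Fin n) (b : Bool) : ℝ :=
  (if u = w then (if b then 0 else 1) else if b then p else 1 - p) *
  (if u = v ∧ w ≠ v then (if b = decide (w ∈ A) then 1 else 0)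
   else if u ∈ A ∧ w ∈ T then (if b then 0 else 1) else 1)

lemma dPr_cyl {n : ℕ} {p : ℝ} (v : Fin n) (A T : Finset (Fin n))
    (hvA : v ∉ A) (hvT : v ∉ T) (hAT : Disjoint A T) :
    dPr p (cylEvent v A T) = p ^ A.card * (1 - p) ^ (n - 1 - A.card + A.card * T.card) := by
  classical
  have hind : ∀ ω : DOmega n,
      (cylEvent v A T).indicator (dwt p) ω = ∏ u, ∏ w, cylG p v A T u w (ω u w) := by
    intro ω
    by_cases hω : ω ∈ cylEvent v A T
    · rw [Set.indicator_of_mem hω]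
      unfold dwt
      refine Finset.prod_congr rfl fun u _ => Finset.prod_congr rfl fun w _ => ?_
      unfold cylG
      obtain ⟨h1, h2⟩ := hω
      by_cases huv : u = v ∧ w ≠ v
      · obtain ⟨rfl, hwv⟩ := huv
        rw [h1 w hwv]
        simp [hwv]
      · rw [if_neg huv]
        by_cases hAT' : u ∈ A ∧ w ∈ T
        · rw [if_pos hAT', h2 w hAT'.2 u hAT'.1]
          simp
        · rw [if_neg hAT', mul_one]
    · rw [Set.indicator_of_notMem hω]
      unfold cylEvent at hω
      simp only [Set.mem_setOf_eq, not_and_or, not_forall] at hω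
      rcases hω with ⟨w, hwv, hne⟩ | h2
      · refine (Finset.prod_eq_zero (Finset.mem_univ v) ?_).symm
        refine Finset.prod_eq_zero (Finset.mem_univ w) ?_
        unfold cylG
        simp [hwv, hne]
      · push_neg at h2
        obtain ⟨w, hwT, x, hxA, hx⟩ := h2
        refine (Finset.prod_eq_zero (Finset.mem_univ x) ?_).symm
        refine Finset.prod_eq_zero (Finset.mem_univ w) ?_
        unfold cylG
        have hxvne : x ≠ v := fun h => hvA (h ▸ hxA)
        have hxw : ω x w = true := by simpa using hx
        simp [hxw, hxvne, hxA, hwT]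
  have hH : ∀ u w : Fin n, cylG p v A T u w true + cylG p v A T u w false =
      (if u = v then (if w = v then 1 else if w ∈ A then p else 1 - p)
       else if u ∈ A ∧ w ∈ T then 1 - p else 1) := by
    intro u w
    unfold cylG
    by_cases h1 : u = v
    · subst h1
      by_cases h2 : w = u
      · subst h2
        simp [hvA]
      · have hnA : ¬ (u ∈ A ∧ w ∈ T) := fun h => hvA h.1
        by_cases h3 : w ∈ A <;>
          simp [Ne.symm h2, h2, hnA, h3] <;> ring
    · by_cases h4 : u ∈ A ∧ w ∈ T
      · have huw : u ≠ w := fun h => (Finset.disjoint_left.mp hAT h4.1) (h ▸ h4.2)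
        simp [h1, h4, huw]
      · by_cases h5 : u = w
        · subst h5
          simp [h1, h4]
        · simp [h1, h4, h5]
  rw [dPr]
  simp only [hind]
  rw [dmaster (cylG p v A T)]
  have hAeqgen : ∀ u : Fin n, u ∉ A → (univ.erase u).filter (· ∈ A) = A := by
    intro u huA
    apply Finset.Subset.antisymm
    · intro a ha
      exact (Finset.mem_filter.mp ha).2
    · intro a ha
      refine Finset.mem_filter.mpr ⟨Finset.mem_erase.mpr ⟨?_, Finset.mem_univ a⟩, ha⟩
      rintro rfl
      exact huA ha
  have hstep : ∀ u : Fin n, (∏ w, (cylG p v A T u w true + cylG p v A T u w false)) =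
      (if u = v then p ^ A.card * (1 - p) ^ (n - 1 - A.card)
       else if u ∈ A then (1 - p) ^ T.card else 1) := by
    intro u
    simp only [hH]
    by_cases h1 : u = v
    · subst h1
      rw [if_pos rfl]
      have hcong : ∀ w : Fin n, (if u = u then (if w = u then (1:ℝ) else if w ∈ A then p else 1 - p)
          else if u ∈ A ∧ w ∈ T then 1 - p else 1)
          = (if w = u then (1:ℝ) else if w ∈ A then p else 1 - p) := fun w => if_pos rfl
      rw [Finset.prod_congr rfl fun w _ => hcong w]
      rw [← Finset.mul_prod_erase univ _ (Finset.mem_univ u), if_pos rfl, one_mul]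
      have hcong2 : ∀ w ∈ univ.erase u, (if w = u then (1:ℝ) else if w ∈ A then p else 1 - p)
          = (if w ∈ A then p else 1 - p) := by
        intro w hw
        rw [if_neg (Finset.mem_erase.mp hw).1]
      rw [Finset.prod_congr rfl hcong2, Finset.prod_ite, Finset.prod_const, Finset.prod_const]
      have hAeq : (univ.erase u).filter (· ∈ A) = A := hAeqgen u hvA
      have hcard : ((univ.erase u).filter (fun w => ¬ w ∈ A)).card = n - 1 - A.card := by
        have h2 := Finset.card_filter_add_card_filter_not
          (s := univ.erase u) (p := (· ∈ A))
        rw [hAeq] at h2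
        have hcu : (univ.erase u).card = n - 1 := by
          rw [Finset.card_erase_of_mem (Finset.mem_univ u), Finset.card_univ, Fintype.card_fin]
        omega
      rw [hAeq, hcard]
    · rw [if_neg h1]
      by_cases h2 : u ∈ A
      · rw [if_pos h2]
        have hcong : ∀ w : Fin n, (if u = v then (if w = v then (1:ℝ) else if w ∈ A then p else 1 - p)
            else if u ∈ A ∧ w ∈ T then 1 - p else 1) = (if w ∈ T then 1 - p else 1) := by
          intro w
          rw [if_neg h1]
          by_cases h3 : w ∈ T <;> simp [h2, h3]
        rw [Finset.prod_congr rfl fun w _ => hcong w, Finset.prod_ite, Finset.prod_const,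
          Finset.prod_const, one_pow, mul_one, Finset.filter_mem_eq_inter, Finset.univ_inter]
      · rw [if_neg h2]
        apply Finset.prod_eq_one
        intro w _
        rw [if_neg h1, if_neg (fun h => h2 h.1)]
  rw [Finset.prod_congr rfl (fun u _ => hstep u)]
  rw [← Finset.mul_prod_erase univ _ (Finset.mem_univ v), if_pos rfl]
  have hcong : ∀ u ∈ univ.erase v, (if u = v then p ^ A.card * (1 - p) ^ (n - 1 - A.card)
      else if u ∈ A then (1 - p) ^ T.card else 1) = (if u ∈ A then (1 - p) ^ T.card else 1) := by
    intro u hu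
    rw [if_neg (Finset.mem_erase.mp hu).1]
  rw [Finset.prod_congr rfl hcong, Finset.prod_ite, Finset.prod_const, Finset.prod_const, one_pow,
    mul_one]
  have hAeq : (univ.erase v).filter (· ∈ A) = A := hAeqgen v hvA
  rw [hAeq, ← pow_mul, mul_assoc, ← pow_add]
  ring_nf

section
variable {n : ℕ} {p : ℝ}

lemma dPr_nonneg (h0 : 0 ≤ p) (h1 : p ≤ 1) (E : Set (DOmega n)) : 0 ≤ dPr p E := by
  apply Finset.sum_nonneg
  intro ω _
  exact Set.indicator_nonneg (fun x _ => dwt_nonneg h0 h1 x) ω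

lemma dPr_le_sum (h0 : 0 ≤ p) (h1 : p ≤ 1) {ι : Type*} (s : Finset ι)
    (F : ι → Set (DOmega n)) (E : Set (DOmega n)) (hE : E ⊆ ⋃ i ∈ s, F i) :
    dPr p E ≤ ∑ i ∈ s, dPr p (F i) := by
  have hpt : ∀ ω : DOmega n, E.indicator (dwt p) ω ≤ ∑ i ∈ s, (F i).indicator (dwt p) ω := by
    intro ω
    by_cases h : ω ∈ E
    · obtain ⟨i, his, hFi⟩ : ∃ i ∈ s, ω ∈ F i := by simpa using hE h
      rw [Set.indicator_of_mem h]
      calc dwt p ω = (F i).indicator (dwt p) ω := (Set.indicator_of_mem hFi _).symm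
        _ ≤ ∑ i ∈ s, (F i).indicator (dwt p) ω :=
          Finset.single_le_sum
            (fun j _ => Set.indicator_nonneg (fun x _ => dwt_nonneg h0 h1 x) ω) his
    · rw [Set.indicator_of_notMem h]
      exact Finset.sum_nonneg fun j _ =>
        Set.indicator_nonneg (fun x _ => dwt_nonneg h0 h1 x) ω
  calc dPr p E ≤ ∑ ω : DOmega n, ∑ i ∈ s, (F i).indicator (dwt p) ω :=
        Finset.sum_le_sum (fun ω _ => hpt ω)
    _ = ∑ i ∈ s, dPr p (F i) := Finset.sum_comm

lemma dPr_add_compl (h0 : 0 ≤ p) (h1 : p ≤ 1) (E : Set (DOmega n)) : dPr p E + dPr p Eᶜ = 1 := by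
  rw [dPr, dPr, ← Finset.sum_add_distrib]
  rw [← sum_dwt (n := n) (p := p)]
  apply Finset.sum_congr rfl
  intro ω _
  by_cases h : ω ∈ E
  · rw [Set.indicator_of_mem h, Set.indicator_of_notMem (by simpa using h), add_zero]
  · rw [Set.indicator_of_notMem h, Set.indicator_of_mem (by simpa using h), zero_add]

lemma n_sub_dES (h0 : 0 ≤ p) (h1 : p ≤ 1) : (n : ℝ) - dES n p = ∑ v : Fin n, dPr p {ω | ¬ dSeymour ω v} := by
  classical
  have hdS : ∀ ω : DOmega n, (dS ω : ℝ) = ∑ v : Fin n, if dSeymour ω v then (1:ℝ) else 0 := by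
    intro ω
    rw [Finset.sum_boole]
    congr 1
    rw [dS]
    have : {v | dSeymour ω v} = ↑(univ.filter (fun v => dSeymour ω v)) := by
      ext v; simp
    rw [this, Set.ncard_coe_finset]
  have hES : dES n p = ∑ v : Fin n, dPr p {ω | dSeymour ω v} := by
    rw [dES, dEx]
    simp_rw [hdS, Finset.mul_sum]
    rw [Finset.sum_comm]
    apply Finset.sum_congr rfl
    intro v _
    rw [dPr]
    apply Finset.sum_congr rfl
    intro ω _
    by_cases h : dSeymour ω v
    · rw [if_pos h, mul_one,
        Set.indicator_of_mem (show ω ∈ {ω : DOmega n | dSeymour ω v} from h)]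
    · rw [if_neg h, mul_zero,
        Set.indicator_of_notMem (show ω ∉ {ω : DOmega n | dSeymour ω v} from h)]
  rw [hES]
  have : (n : ℝ) = ∑ _v : Fin n, (1 : ℝ) := by simp
  rw [this, ← Finset.sum_sub_distrib]
  apply Finset.sum_congr rfl
  intro v _
  have h2 := dPr_add_compl h0 h1 (E := {ω : DOmega n | dSeymour ω v})
  have : {ω : DOmega n | dSeymour ω v}ᶜ = {ω : DOmega n | ¬ dSeymour ω v} := rfl
  rw [this] at h2
  linarith

end

def TSet {n : ℕ} (v : Fin n) (a : ℕ) (A : Finset (Fin n)) : Finset (Finset (Fin n)) :=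
  if a + 1 ≤ A.card ∧ 1 ≤ n - 2*A.card
  then (univ \ insert v A).powersetCard (n - 2*A.card) else {∅}

lemma cover {n : ℕ} (v : Fin n) (a : ℕ) (ω : DOmega n) (hω : ¬ dSeymour ω v) :
    ∃ A ∈ (univ.erase v).powerset, ∃ T ∈ TSet v a A, ω ∈ cylEvent v A T := by
  classical
  set A : Finset (Fin n) := univ.filter (fun w => v ≠ w ∧ ω v w = true) with hA
  set B : Finset (Fin n) :=
    univ.filter (fun w => w ≠ v ∧ ω v w = false ∧ ∃ x ∈ A, x ≠ w ∧ ω x w = true) with hB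
  set F : Finset (Fin n) :=
    univ.filter (fun w => w ≠ v ∧ w ∉ A ∧ ∀ x ∈ A, ω x w = false) with hF
  have hmemA : ∀ w, w ∈ A ↔ v ≠ w ∧ ω v w = true := by
    intro w; rw [hA, Finset.mem_filter]; simp
  have hmemB : ∀ w, w ∈ B ↔ w ≠ v ∧ ω v w = false ∧ ∃ x ∈ A, x ≠ w ∧ ω x w = true := by
    intro w; rw [hB, Finset.mem_filter]; simp
  have hmemF : ∀ w, w ∈ F ↔ w ≠ v ∧ w ∉ A ∧ ∀ x ∈ A, ω x w = false := by
    intro w; rw [hF, Finset.mem_filter]; simp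
  clear_value A B F
  have hvA : v ∉ A := fun h => ((hmemA v).mp h).1 rfl
  have hN1 : dN1 ω v = ↑A := by
    ext w
    simp only [dN1, dadj, Set.mem_setOf_eq, Finset.mem_coe]
    rw [hmemA w]
  have hN2 : dN2 ω v = ↑B := by
    ext w
    simp only [dN2, dadj, Set.mem_setOf_eq, Finset.mem_coe]
    rw [hmemB w]
    constructor
    · rintro ⟨hwv, hnadj, x, ⟨hvx, hx⟩, hxw, hxw'⟩
      have hvw : ω v w = false := by
        have : ¬ ω v w = true := fun hc => hnadj ⟨Ne.symm hwv, hc⟩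
        simpa using this
      exact ⟨hwv, hvw, x, (hmemA x).mpr ⟨hvx, hx⟩, hxw, hxw'⟩
    · rintro ⟨hwv, hvw, x, hxA, hxw, hxw'⟩
      have hx := (hmemA x).mp hxA
      refine ⟨hwv, fun hc => ?_, x, ⟨hx.1, hx.2⟩, hxw, hxw'⟩
      rw [hc.2] at hvw
      exact absurd hvw (by simp)
  have hcardlt : B.card < A.card := by
    have h1 : (dN1 ω v).ncard = A.card := by rw [hN1, Set.ncard_coe_finset]
    have h2 : (dN2 ω v).ncard = B.card := by rw [hN2, Set.ncard_coe_finset]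
    rw [dSeymour, h1, h2, not_le] at hω
    exact hω
  have hsplit : univ.erase v = A ∪ B ∪ F := by
    ext w
    constructor
    · intro hw
      have hwv := (Finset.mem_erase.mp hw).1
      rw [Finset.mem_union, Finset.mem_union]
      by_cases h1 : ω v w = true
      · exact Or.inl (Or.inl ((hmemA w).mpr ⟨Ne.symm hwv, h1⟩))
      · have h1' : ω v w = false := by simpa using h1
        have hwA : w ∉ A := fun h => h1 ((hmemA w).mp h).2
        by_cases h2 : ∃ x ∈ A, x ≠ w ∧ ω x w = true
        · exact Or.inl (Or.inr ((hmemB w).mpr ⟨hwv, h1', h2⟩))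
        · push_neg at h2
          refine Or.inr ((hmemF w).mpr ⟨hwv, hwA, fun x hx => ?_⟩)
          by_cases hxw : x = w
          · exact absurd (hxw ▸ hx) hwA
          · have := h2 x hx hxw
            simpa using this
    · intro hw
      refine Finset.mem_erase.mpr ⟨?_, Finset.mem_univ w⟩
      rcases Finset.mem_union.mp hw with hw' | hF'
      · rcases Finset.mem_union.mp hw' with hA' | hB'
        · exact Ne.symm ((hmemA w).mp hA').1
        · exact ((hmemB w).mp hB').1
      · exact ((hmemF w).mp hF').1
  have hdisjAB : Disjoint A B := by
    rw [Finset.disjoint_left]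
    intro x hxA hxB
    have h1 := ((hmemA x).mp hxA).2
    have h2 := ((hmemB x).mp hxB).2.1
    rw [h1] at h2
    exact absurd h2 (by simp)
  have hdisjABF : Disjoint (A ∪ B) F := by
    rw [Finset.disjoint_left]
    intro x hxAB hxF
    have h2 := ((hmemF x).mp hxF).2
    rcases Finset.mem_union.mp hxAB with h | h
    · exact h2.1 h
    · obtain ⟨y, hyA, hyx, hyx'⟩ := ((hmemB x).mp h).2.2
      rw [h2.2 y hyA] at hyx'
      exact absurd hyx' (by simp)
  have hn : 1 ≤ n := by
    rcases Nat.eq_zero_or_pos n with h | h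
    · subst h; exact absurd v.2 (by omega)
    · exact h
  have hcards : A.card + B.card + F.card + 1 = n := by
    have h1 : (univ.erase v).card = n - 1 := by
      rw [Finset.card_erase_of_mem (Finset.mem_univ v), Finset.card_univ, Fintype.card_fin]
    rw [hsplit, Finset.card_union_of_disjoint hdisjABF, Finset.card_union_of_disjoint hdisjAB]
      at h1
    omega
  have hrow : ∀ w, w ≠ v → ω v w = decide (w ∈ A) := by
    intro w hwv
    by_cases h : ω v w = true
    · rw [h, eq_comm, decide_eq_true_iff]
      exact (hmemA w).mpr ⟨Ne.symm hwv, h⟩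
    · have h' : ω v w = false := by simpa using h
      rw [h', eq_comm, decide_eq_false_iff_not]
      exact fun hc => h ((hmemA w).mp hc).2
  refine ⟨A, Finset.mem_powerset.mpr ?_, ?_⟩
  · intro x hx
    refine Finset.mem_erase.mpr ⟨?_, Finset.mem_univ x⟩
    rintro rfl
    exact hvA hx
  by_cases hcond : a + 1 ≤ A.card ∧ 1 ≤ n - 2*A.card
  · obtain ⟨T, hTF, hTcard⟩ := Finset.exists_subset_card_eq (by omega : n - 2*A.card ≤ F.card)
    refine ⟨T, ?_, ?_⟩
    · rw [TSet, if_pos hcond, Finset.mem_powersetCard]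
      refine ⟨fun x hx => ?_, hTcard⟩
      have hxF := (hmemF x).mp (hTF hx)
      rw [Finset.mem_sdiff, Finset.mem_insert]
      exact ⟨Finset.mem_univ x, fun h => h.elim hxF.1 hxF.2.1⟩
    · refine ⟨hrow, fun w hwT x hxA => ?_⟩
      exact ((hmemF w).mp (hTF hwT)).2.2 x hxA
  · refine ⟨∅, by rw [TSet, if_neg hcond]; exact Finset.mem_singleton_self ∅, ?_⟩
    exact ⟨hrow, fun w hw => absurd hw (Finset.notMem_empty w)⟩

lemma vertex_bound {n : ℕ} {p : ℝ} (h0 : 0 ≤ p) (h1 : p ≤ 1) (v : Fin n) (a : ℕ) :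
    dPr p {ω : DOmega n | ¬ dSeymour ω v} ≤
      ∑ k ∈ range n, ((n-1).choose k : ℝ) * p^k * (1-p)^(n-1-k) *
        (if a + 1 ≤ k ∧ 1 ≤ n - 2*k
         then (((n-1-k).choose (n-2*k)) : ℝ) * (1-p)^(k*(n-2*k)) else 1) := by
  classical
  have step1 : dPr p {ω : DOmega n | ¬ dSeymour ω v} ≤
      ∑ A ∈ (univ.erase v).powerset, dPr p (⋃ T ∈ TSet v a A, cylEvent v A T) := by
    apply dPr_le_sum h0 h1
    intro ω hω
    obtain ⟨A, hA, T, hT, hcyl⟩ := cover v a ω hω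
    exact Set.mem_biUnion hA (Set.mem_biUnion hT hcyl)
  have step2 : ∀ A ∈ (univ.erase v).powerset,
      dPr p (⋃ T ∈ TSet v a A, cylEvent v A T) ≤
        p^A.card * (1-p)^(n-1-A.card) *
          (if a + 1 ≤ A.card ∧ 1 ≤ n - 2*A.card
           then (((n-1-A.card).choose (n-2*A.card)) : ℝ) * (1-p)^(A.card*(n-2*A.card))
           else 1) := by
    intro A hA
    have hvA : v ∉ A := fun h =>
      (Finset.mem_erase.mp (Finset.mem_powerset.mp hA h)).1 rfl
    have hle : dPr p (⋃ T ∈ TSet v a A, cylEvent v A T) ≤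
        ∑ T ∈ TSet v a A, dPr p (cylEvent v A T) :=
      dPr_le_sum h0 h1 _ _ _ (fun ω hω => hω)
    refine hle.trans ?_
    by_cases hcond : a + 1 ≤ A.card ∧ 1 ≤ n - 2*A.card
    · rw [if_pos hcond]
      have hsum : ∀ T ∈ TSet v a A, dPr p (cylEvent v A T) =
          p^A.card * (1-p)^(n-1-A.card) * (1-p)^(A.card*(n-2*A.card)) := by
        intro T hT
        rw [TSet, if_pos hcond, Finset.mem_powersetCard] at hT
        obtain ⟨hTsub, hTcard⟩ := hT
        have hvT : v ∉ T := fun h => by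
          have := hTsub h
          rw [Finset.mem_sdiff] at this
          exact this.2 (Finset.mem_insert_self v A)
        have hAT : Disjoint A T := by
          rw [Finset.disjoint_right]
          intro x hxT hxA
          have := hTsub hxT
          rw [Finset.mem_sdiff] at this
          exact this.2 (Finset.mem_insert_of_mem hxA)
        rw [dPr_cyl v A T hvA hvT hAT, hTcard, pow_add, mul_assoc]
      rw [Finset.sum_congr rfl hsum, Finset.sum_const]
      rw [TSet, if_pos hcond, Finset.card_powersetCard]
      have hcard : (univ \ insert v A).card = n - 1 - A.card := by
        rw [Finset.card_sdiff_of_subset (Finset.subset_univ _), Finset.card_univ, Fintype.card_fin,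
          Finset.card_insert_of_notMem hvA]
        omega
      rw [hcard, nsmul_eq_mul]
      ring_nf
      exact le_refl _
    · rw [if_neg hcond, mul_one]
      have hTS : TSet v a A = {∅} := by rw [TSet, if_neg hcond]
      rw [hTS, Finset.sum_singleton,
        dPr_cyl v A ∅ hvA (Finset.notMem_empty v) (Finset.disjoint_right.mpr
          (fun {x} hx => absurd hx (Finset.notMem_empty x)))]
      simp
  have step3 : ∑ A ∈ (univ.erase v).powerset,
      (p^A.card * (1-p)^(n-1-A.card) *
        (if a + 1 ≤ A.card ∧ 1 ≤ n - 2*A.card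
         then (((n-1-A.card).choose (n-2*A.card)) : ℝ) * (1-p)^(A.card*(n-2*A.card))
         else 1)) =
      ∑ k ∈ range n, ((n-1).choose k : ℝ) * p^k * (1-p)^(n-1-k) *
        (if a + 1 ≤ k ∧ 1 ≤ n - 2*k
         then (((n-1-k).choose (n-2*k)) : ℝ) * (1-p)^(k*(n-2*k)) else 1) := by
    have hcarderase : (univ.erase v).card = n - 1 := by
      rw [Finset.card_erase_of_mem (Finset.mem_univ v), Finset.card_univ, Fintype.card_fin]
    have h := Finset.sum_powerset_apply_card
      (f := fun m => p^m * (1-p)^(n-1-m) *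
        (if a + 1 ≤ m ∧ 1 ≤ n - 2*m
         then (((n-1-m).choose (n-2*m)) : ℝ) * (1-p)^(m*(n-2*m)) else 1))
      (x := univ.erase v)
    rw [hcarderase] at h
    have hrange : n - 1 + 1 = n := by
      have : 1 ≤ n := by
        rcases Nat.eq_zero_or_pos n with h' | h'
        · subst h'; exact absurd v.2 (by omega)
        · exact h'
      omega
    rw [hrange] at h
    rw [h]
    apply Finset.sum_congr rfl
    intro k _
    rw [nsmul_eq_mul]
    ring
  calc dPr p {ω : DOmega n | ¬ dSeymour ω v}
      ≤ ∑ A ∈ (univ.erase v).powerset, dPr p (⋃ T ∈ TSet v a A, cylEvent v A T) := step1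
    _ ≤ ∑ A ∈ (univ.erase v).powerset,
        (p^A.card * (1-p)^(n-1-A.card) *
          (if a + 1 ≤ A.card ∧ 1 ≤ n - 2*A.card
           then (((n-1-A.card).choose (n-2*A.card)) : ℝ) * (1-p)^(A.card*(n-2*A.card))
           else 1)) := Finset.sum_le_sum step2
    _ = _ := step3

lemma binom_sum_eq {N : ℕ} (x y : ℝ) :
    ∑ k ∈ range (N+1), (N.choose k : ℝ) * x^k * y^(N-k) = (x + y)^N := by
  rw [add_pow]
  apply Finset.sum_congr rfl
  intro k _
  ring

lemma binom_terms_nonneg {N k : ℕ} {p : ℝ} (h0 : 0 ≤ p) (h1 : p ≤ 1) :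
    0 ≤ (N.choose k : ℝ) * p^k * (1-p)^(N-k) := by
  have : (0:ℝ) ≤ 1 - p := by linarith
  positivity

/-- lower-tail tilt -/
lemma tilt_low {N a : ℕ} {p lam : ℝ} (h0 : 0 ≤ p) (h1 : p ≤ 1)
    (hl0 : 0 < lam) (hl1 : lam ≤ 1) :
    ∑ k ∈ range (N+1), (if k ≤ a then (N.choose k : ℝ) * p^k * (1-p)^(N-k) else 0)
      ≤ (lam^a)⁻¹ * (p*lam + (1-p))^N := by
  have key : ∀ k ∈ range (N+1),
      (if k ≤ a then (N.choose k : ℝ) * p^k * (1-p)^(N-k) else 0)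
        ≤ (lam^a)⁻¹ * ((N.choose k : ℝ) * (p*lam)^k * (1-p)^(N-k)) := by
    intro k _
    have hq : (0:ℝ) ≤ 1 - p := by linarith
    by_cases h : k ≤ a
    · rw [if_pos h]
      have hlam : lam^a ≤ lam^k := pow_le_pow_of_le_one hl0.le hl1 h
      have hterm : (0:ℝ) ≤ (N.choose k : ℝ) * p^k * (1-p)^(N-k) :=
        binom_terms_nonneg h0 h1
      have hla : 0 < lam^a := pow_pos hl0 a
      rw [mul_pow]
      have e : ((N.choose k : ℝ) * (p^k*lam^k) * (1-p)^(N-k))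
          = ((N.choose k : ℝ) * p^k * (1-p)^(N-k)) * lam^k := by ring
      rw [e, inv_mul_eq_div, le_div_iff₀ hla]
      exact mul_le_mul_of_nonneg_left hlam hterm
    · rw [if_neg h]
      have : (0:ℝ) ≤ (N.choose k : ℝ) * (p*lam)^k * (1-p)^(N-k) := by positivity
      positivity
  calc ∑ k ∈ range (N+1), (if k ≤ a then (N.choose k : ℝ) * p^k * (1-p)^(N-k) else 0)
      ≤ ∑ k ∈ range (N+1), (lam^a)⁻¹ * ((N.choose k : ℝ) * (p*lam)^k * (1-p)^(N-k)) :=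
        Finset.sum_le_sum key
    _ = (lam^a)⁻¹ * (p*lam + (1-p))^N := by
        rw [← Finset.mul_sum, binom_sum_eq]

/-- upper-tail tilt -/
lemma tilt_high {N a₀ : ℕ} {p : ℝ} (h0 : 0 < p) (hp : p ≤ 1/2) :
    ∑ k ∈ range (N+1), (if a₀ ≤ k then (N.choose k : ℝ) * p^k * (1-p)^(N-k) else 0)
      ≤ (p/(1-p))^a₀ * (2*(1-p))^N := by
  have hq : (0:ℝ) < 1 - p := by linarith
  have hr : (1:ℝ) ≤ (1-p)/p := by
    rw [le_div_iff₀ h0]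
    linarith
  have key : ∀ k ∈ range (N+1),
      (if a₀ ≤ k then (N.choose k : ℝ) * p^k * (1-p)^(N-k) else 0)
        ≤ (p/(1-p))^a₀ * ((N.choose k : ℝ) * (p*((1-p)/p))^k * (1-p)^(N-k)) := by
    intro k _
    by_cases h : a₀ ≤ k
    · rw [if_pos h]
      have h2 : (1:ℝ) ≤ ((1-p)/p)^k * (p/(1-p))^a₀ := by
        have e1 : ((1-p)/p)^k * (p/(1-p))^a₀ = ((1-p)/p)^(k - a₀) := by
          have : ((1-p)/p)^k = ((1-p)/p)^(k-a₀) * ((1-p)/p)^a₀ := by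
            rw [← pow_add]; congr 1; omega
          rw [this, mul_assoc, ← mul_pow, div_mul_div_comm]
          rw [show (1-p)*p = p*(1-p) by ring, div_self (by positivity), one_pow, mul_one]
        rw [e1]
        exact one_le_pow₀ hr
      calc (N.choose k : ℝ) * p^k * (1-p)^(N-k)
          ≤ ((N.choose k : ℝ) * p^k * (1-p)^(N-k)) * (((1-p)/p)^k * (p/(1-p))^a₀) := by
            nlinarith [binom_terms_nonneg (N:=N) (k:=k) h0.le (by linarith : p ≤ 1),
              mul_nonneg (binom_terms_nonneg (N:=N) (k:=k) h0.le (by linarith : p ≤ 1)) (by linarith : (0:ℝ) ≤ ((1-p)/p)^k * (p/(1-p))^a₀ - 1)]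
        _ = (p/(1-p))^a₀ * ((N.choose k : ℝ) * (p*((1-p)/p))^k * (1-p)^(N-k)) := by
            rw [mul_pow]
            ring
    · rw [if_neg h]
      have hx : (0:ℝ) ≤ p * ((1-p)/p) := by positivity
      positivity
  calc ∑ k ∈ range (N+1), (if a₀ ≤ k then (N.choose k : ℝ) * p^k * (1-p)^(N-k) else 0)
      ≤ ∑ k ∈ range (N+1),
          (p/(1-p))^a₀ * ((N.choose k : ℝ) * (p*((1-p)/p))^k * (1-p)^(N-k)) :=
        Finset.sum_le_sum key
    _ = (p/(1-p))^a₀ * (p*((1-p)/p) + (1-p))^N := by rw [← Finset.mul_sum, binom_sum_eq]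
    _ = (p/(1-p))^a₀ * (2*(1-p))^N := by
        congr 2
        field_simp
        ring

lemma sum_bound {n : ℕ} {p lam : ℝ} (hn : 2 ≤ n) (h0 : 0 < p) (hp : p < 1/2)
    (hl0 : 0 < lam) (hl1 : lam ≤ 1) (a : ℕ)
    (hρ : (n:ℝ) * Real.exp (-(p*(a+1))) ≤ 1) :
    ∑ k ∈ range n, ((n-1).choose k : ℝ) * p^k * (1-p)^(n-1-k) *
        (if a + 1 ≤ k ∧ 1 ≤ n - 2*k
         then (((n-1-k).choose (n-2*k)) : ℝ) * (1-p)^(k*(n-2*k)) else 1)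
      ≤ (lam^a)⁻¹ * (p*lam + (1-p))^(n-1)
        + (n:ℝ) * Real.exp (-(p*(a+1)))
        + Real.exp (-(1-2*p)^2*((n:ℝ)-1)/2) := by
  have hq0 : (0:ℝ) < 1 - p := by linarith
  have hp1 : p ≤ 1 := by linarith
  set N := n - 1 with hN
  have hnN : n = N + 1 := by omega
  set a₀ := n - n/2 with ha₀
  set ρ : ℝ := (n:ℝ) * Real.exp (-(p*(a+1))) with hρdef
  have hρ0 : 0 ≤ ρ := by positivity
  rw [show ((n:ℝ) - 1) = ((N:ℕ):ℝ) by rw [hnN]; push_cast; ring]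
  set b : ℕ → ℝ := fun k => (N.choose k : ℝ) * p^k * (1-p)^(N-k) with hb
  have hbnn : ∀ k, 0 ≤ b k := fun k => binom_terms_nonneg h0.le hp1
  have hpt : ∀ k ∈ range (N+1),
      b k * (if a + 1 ≤ k ∧ 1 ≤ n - 2*k
         then (((N-k).choose (n-2*k)) : ℝ) * (1-p)^(k*(n-2*k)) else 1)
      ≤ (if k ≤ a then b k else 0) + ρ * b k + (if a₀ ≤ k then b k else 0) := by
    intro k hk
    by_cases hcond : a + 1 ≤ k ∧ 1 ≤ n - 2*k
    · rw [if_pos hcond, if_neg (by omega), if_neg (by omega)]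
      set t := n - 2*k with ht
      have ht1 : 1 ≤ t := hcond.2
      have hCb : (((N-k).choose t) : ℝ) ≤ (n:ℝ)^t := by
        calc (((N-k).choose t) : ℝ) ≤ ((N-k:ℕ):ℝ)^t := by
              exact_mod_cast Nat.choose_le_pow (N-k) t
          _ ≤ (n:ℝ)^t := by
              apply pow_le_pow_left₀ (by positivity)
              exact_mod_cast Nat.sub_le_of_le_add (by omega)
      have hqexp : (1-p)^(k*t) ≤ Real.exp (-(p*k))^t := by
        have h1 : 1 - p ≤ Real.exp (-p) := by
          have := Real.add_one_le_exp (-p)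
          linarith
        calc (1-p)^(k*t) = ((1-p)^k)^t := by rw [pow_mul]
          _ ≤ (Real.exp (-p)^k)^t := by
              apply pow_le_pow_left₀ (by positivity)
              exact pow_le_pow_left₀ hq0.le h1 k
          _ = Real.exp (-(p*k))^t := by
              rw [← Real.exp_nat_mul]
              congr 1
              ring
      have hmid : (((N-k).choose t) : ℝ) * (1-p)^(k*t) ≤ ρ := by
        have step : (((N-k).choose t) : ℝ) * (1-p)^(k*t)
            ≤ ((n:ℝ) * Real.exp (-(p*k)))^t := by
          rw [mul_pow]
          apply mul_le_mul hCb hqexp (by positivity) (by positivity)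
        have step2 : ((n:ℝ) * Real.exp (-(p*k)))^t ≤ ρ^t := by
          apply pow_le_pow_left₀ (by positivity)
          rw [hρdef]
          apply mul_le_mul_of_nonneg_left _ (by positivity)
          apply Real.exp_le_exp.mpr
          have : (a:ℝ) + 1 ≤ (k:ℝ) := by exact_mod_cast hcond.1
          nlinarith
        have step3 : ρ^t ≤ ρ := pow_le_of_le_one hρ0 hρ (by omega)
        linarith
      have := mul_le_mul_of_nonneg_left hmid (hbnn k)
      nlinarith [hbnn k]
    · rw [if_neg hcond, mul_one]
      by_cases hka : k ≤ a
      · rw [if_pos hka]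
        have h3 : (0:ℝ) ≤ (if a₀ ≤ k then b k else 0) := by
          split_ifs; exacts [hbnn k, le_refl 0]
        nlinarith [mul_nonneg hρ0 (hbnn k)]
      · have hk2 : n ≤ 2*k := by omega
        rw [if_neg hka, if_pos (by omega)]
        have h3 : (0:ℝ) ≤ ρ * b k := mul_nonneg hρ0 (hbnn k)
        linarith
  have hsum2 : ∑ k ∈ range (N+1), ρ * b k = ρ := by
    rw [← Finset.mul_sum, hb]
    rw [binom_sum_eq p (1-p)]
    norm_num
  have hsum3 : ∑ k ∈ range (N+1), (if a₀ ≤ k then b k else 0)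
      ≤ Real.exp (-(1-2*p)^2*N/2) := by
    have hY := tilt_high (N := N) (a₀ := a₀) h0 hp.le
    set Y := (p/(1-p))^a₀ * (2*(1-p))^N with hYdef
    have hY0 : 0 ≤ Y := by positivity
    have hYsq : Y^2 ≤ Real.exp (-(1-2*p)^2*N/2)^2 := by
      have e1 : Y^2 = (p/(1-p))^(2*a₀) * ((2*(1-p))^2)^N := by
        rw [hYdef, mul_pow, ← pow_mul, ← pow_mul, mul_comm a₀ 2, mul_comm N 2,
          pow_mul (2*(1-p)) 2 N]
      have e2 : (p/(1-p))^(2*a₀) ≤ (p/(1-p))^N := by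
        apply pow_le_pow_of_le_one (by positivity) (by
          rw [div_le_one hq0]; linarith) (by omega)
      have e3 : (p/(1-p))^N * ((2*(1-p))^2)^N = (4*p*(1-p))^N := by
        rw [← mul_pow]
        congr 1
        field_simp
        ring
      have e4 : (4*p*(1-p))^N ≤ Real.exp (-(1-2*p)^2)^N := by
        apply pow_le_pow_left₀ (by nlinarith)
        have := Real.add_one_le_exp (-(1-2*p)^2)
        nlinarith
      have e5 : Real.exp (-(1-2*p)^2)^N = Real.exp (-(1-2*p)^2*N/2)^2 := by
        rw [← Real.exp_nat_mul, ← Real.exp_nat_mul]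
        congr 1
        push_cast
        ring
      have hmono : (p/(1-p))^(2*a₀) * ((2*(1-p))^2)^N ≤ (p/(1-p))^N * ((2*(1-p))^2)^N := by
        apply mul_le_mul_of_nonneg_right e2 (by positivity)
      calc Y^2 = (p/(1-p))^(2*a₀) * ((2*(1-p))^2)^N := e1
        _ ≤ (p/(1-p))^N * ((2*(1-p))^2)^N := hmono
        _ = (4*p*(1-p))^N := e3
        _ ≤ Real.exp (-(1-2*p)^2)^N := e4
        _ = Real.exp (-(1-2*p)^2*N/2)^2 := e5
    have hE : (0:ℝ) < Real.exp (-(1-2*p)^2*N/2) := Real.exp_pos _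
    nlinarith
  calc ∑ k ∈ range n, ((n-1).choose k : ℝ) * p^k * (1-p)^(n-1-k) *
        (if a + 1 ≤ k ∧ 1 ≤ n - 2*k
         then (((n-1-k).choose (n-2*k)) : ℝ) * (1-p)^(k*(n-2*k)) else 1)
      = ∑ k ∈ range (N+1), b k * (if a + 1 ≤ k ∧ 1 ≤ n - 2*k
         then (((N-k).choose (n-2*k)) : ℝ) * (1-p)^(k*(n-2*k)) else 1) := by
        rw [hnN]
        simp only [Nat.add_sub_cancel, hb]
    _ ≤ ∑ k ∈ range (N+1),
        ((if k ≤ a then b k else 0) + ρ * b k + (if a₀ ≤ k then b k else 0)) :=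
        Finset.sum_le_sum hpt
    _ = (∑ k ∈ range (N+1), (if k ≤ a then b k else 0))
        + (∑ k ∈ range (N+1), ρ * b k)
        + (∑ k ∈ range (N+1), (if a₀ ≤ k then b k else 0)) := by
        rw [← Finset.sum_add_distrib, ← Finset.sum_add_distrib]
    _ ≤ (lam^a)⁻¹ * (p*lam + (1-p))^N + ρ + Real.exp (-(1-2*p)^2*N/2) := by
        have := tilt_low (N := N) (a := a) (p := p) (lam := lam) h0.le hp1 hl0 hl1
        rw [hsum2]
        exact add_le_add (add_le_add this (le_refl ρ)) hsum3

lemma c_pos {δ : ℝ} (h0 : 0 < δ) (h1 : δ < 1) : 0 < δ + (1-δ) * Real.log (1-δ) := by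
  have hlam0 : (0:ℝ) < 1 - δ := by linarith
  have hlt : Real.log (1-δ)⁻¹ < (1-δ)⁻¹ - 1 := by
    apply Real.log_lt_sub_one_of_pos (by positivity)
    rw [ne_eq, inv_eq_one]
    linarith
  rw [Real.log_inv] at hlt
  have h2 : (1-δ)⁻¹ - 1 = δ / (1-δ) := by field_simp; ring
  rw [h2] at hlt
  have h3 : (1-δ) * (δ / (1-δ)) = δ := by field_simp
  have h4 := mul_lt_mul_of_pos_left hlt hlam0
  rw [h3] at h4
  nlinarith

lemma helperB2 {nr P L ε δ A : ℝ} (hε : 0 < ε) (hδdef : δ = ε/(2*(2+ε)))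
    (hnr : 2 ≤ nr) (h8 : (8+2*ε)/ε ≤ nr) (hL0 : 0 < L) (hP0 : 0 < P)
    (hPsq : (2+ε)*L/nr ≤ P^2) (ha1 : (1-δ)*(nr-1)*P ≤ A) :
    (2+ε/4)*L ≤ P*A := by
  have hδ0 : 0 < δ := by rw [hδdef]; positivity
  have hδ1 : δ < 1/2 := by
    rw [hδdef, div_lt_iff₀ (by positivity)]
    nlinarith
  have hn0 : (0:ℝ) < nr := by linarith
  have h1 : (1-δ)*(nr-1)*P^2 ≤ P*A := by nlinarith
  have h2 : (1-δ) * (2+ε) = 2 + ε/2 := by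
    rw [hδdef]
    field_simp
    ring
  have h3 : (1-δ)*(nr-1)*((2+ε)*L/nr) ≤ (1-δ)*(nr-1)*P^2 := by
    apply mul_le_mul_of_nonneg_left hPsq
    nlinarith
  have h8' : 8 + 2*ε ≤ nr * ε := by
    rw [div_le_iff₀ (by positivity)] at h8
    nlinarith
  have h4 : (2 + ε/4)*L ≤ (1-δ)*(nr-1)*((2+ε)*L/nr) := by
    have e : (1-δ)*(nr-1)*((2+ε)*L/nr) = ((1-δ)*(2+ε)) * L * ((nr-1)/nr) := by
      field_simp
    rw [e, h2]
    have h5 : (2+ε/4) ≤ (2+ε/2) * ((nr-1)/nr) := by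
      rw [show (2+ε/2) * ((nr-1)/nr) = ((2+ε/2)*(nr-1))/nr from (mul_div_assoc _ _ _).symm,
        le_div_iff₀ hn0]
      nlinarith
    nlinarith
  linarith

lemma helperB1exp {nr P L c : ℝ} (hc0 : 0 < c) (hnr : 2 ≤ nr) (hL0 : 0 < L)
    (h16 : 16*L ≤ c^2*nr) (hP : Real.sqrt (L/nr) ≤ P) : 2*L ≤ (nr-1)*P*c := by
  have hn0 : (0:ℝ) < nr := by linarith
  set s : ℝ := Real.sqrt L with hsdef
  set r : ℝ := Real.sqrt nr with hrdef
  have hs2 : s^2 = L := Real.sq_sqrt hL0.le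
  have hr2 : r^2 = nr := Real.sq_sqrt hn0.le
  have hrpos : 0 < r := Real.sqrt_pos.mpr hn0
  have hspos : 0 < s := Real.sqrt_pos.mpr hL0
  have hsr : Real.sqrt (L/nr) = s / r := by
    rw [hsdef, hrdef, ← Real.sqrt_div hL0.le]
  have hPlow : s / r ≤ P := hsr ▸ hP
  have hcr4s : 4 * s ≤ c * r := by
    nlinarith [sq_nonneg (c*r - 4*s), sq_nonneg (c*r + 4*s), mul_pos hc0 hrpos]
  have hn1r : r^2/2 ≤ nr - 1 := by nlinarith
  have step : (nr-1) * (s/r) * c ≤ (nr-1) * P * c := by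
    apply mul_le_mul_of_nonneg_right (mul_le_mul_of_nonneg_left hPlow (by nlinarith)) hc0.le
  have step2 : 2 * s^2 ≤ (nr-1) * (s/r) * c := by
    rw [show (nr-1) * (s/r) * c = ((nr-1)*s*c)/r by ring, le_div_iff₀ hrpos]
    nlinarith [mul_nonneg (by linarith : (0:ℝ) ≤ c*r - 4*s) (mul_nonneg hrpos.le hspos.le),
      mul_nonneg (by linarith : (0:ℝ) ≤ nr - 1 - r^2/2) (mul_nonneg hspos.le hc0.le)]
  nlinarith
lemma helperB3exp {nr s L η : ℝ} (hη : 0 < η) (hnr : 2 ≤ nr) (h22 : 2*(2+η)/η ≤ nr)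
    (hL0 : 0 < L) (hs0 : 0 < s) (hs1 : s ≤ 1)
    (hP3' : (1-s) * Real.exp s ≤ 1 - (2+η)*L/nr) :
    (1+η/4)*L ≤ s^2*(nr-1)/2 := by
  have hn0 : (0:ℝ) < nr := by linarith
  have hsq : (2+η)*L/nr ≤ s^2 := by
    have h1 : 1 + s ≤ Real.exp s := by
      have := Real.add_one_le_exp s
      linarith
    have h2 : (1-s)*(1+s) ≤ (1-s)*Real.exp s :=
      mul_le_mul_of_nonneg_left h1 (by linarith)
    nlinarith
  have h22' : 2*(2+η) ≤ nr * η := by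
    rw [div_le_iff₀ (by positivity)] at h22
    nlinarith
  have hA : (2+η)*L ≤ s^2*nr := by
    rw [div_le_iff₀ hn0] at hsq
    linarith
  have hint1 : (2+η)*L*(nr-1) ≤ (s^2*nr)*(nr-1) :=
    mul_le_mul_of_nonneg_right hA (by linarith : (0:ℝ) ≤ nr - 1)
  have hint2 : (0:ℝ) ≤ L * (η/2*nr - (2+η)) :=
    mul_nonneg hL0.le (by linarith : (0:ℝ) ≤ η/2*nr - (2+η))
  have key : (2*(1+η/4)*L) * nr ≤ (s^2*(nr-1)) * nr := by nlinarith [hint1, hint2]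
  have key2 : 2*(1+η/4)*L ≤ s^2*(nr-1) := le_of_mul_le_mul_right key hn0
  rw [le_div_iff₀ (by norm_num : (0:ℝ) < 2)]
  linarith

lemma helperB1 {P δ lam c : ℝ} (n a : ℕ) (hn : 2 ≤ n) (hδ0 : 0 < δ) (hδ1 : δ < 1/2)
    (hlam : lam = 1 - δ) (hc : c = δ + lam * Real.log lam)
    (hP0 : 0 < P) (hP2 : P < 1/2) (ha : (a:ℝ) ≤ (1-δ) * ((n:ℝ)-1) * P) :
    (lam^a)⁻¹ * (P*lam + (1-P))^(n-1) ≤ Real.exp (-(((n:ℝ)-1) * P * c)) := by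
  have hlam0 : 0 < lam := by rw [hlam]; linarith
  have hlam1 : lam ≤ 1 := by rw [hlam]; linarith
  have hnr : (2:ℝ) ≤ (n:ℝ) := by exact_mod_cast hn
  have e1 : (lam^a)⁻¹ = Real.exp (-((a:ℝ) * Real.log lam)) := by
    rw [Real.exp_neg]
    congr 1
    rw [Real.exp_nat_mul, Real.exp_log hlam0]
  have e2 : (P*lam + (1-P))^(n-1) ≤ Real.exp (-(δ*P) * ((n:ℝ)-1)) := by
    have h1 : P*lam + (1-P) = 1 - δ*P := by rw [hlam]; ring
    have h2 : 1 - δ*P ≤ Real.exp (-(δ*P)) := by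
      have := Real.add_one_le_exp (-(δ*P))
      linarith
    have h3 : (0:ℝ) ≤ 1 - δ*P := by nlinarith
    calc (P*lam + (1-P))^(n-1) = (1 - δ*P)^(n-1) := by rw [h1]
      _ ≤ Real.exp (-(δ*P))^(n-1) := pow_le_pow_left₀ h3 h2 _
      _ = Real.exp (-(δ*P) * ((n-1:ℕ):ℝ)) := by
          rw [← Real.exp_nat_mul]; ring_nf
      _ = Real.exp (-(δ*P) * ((n:ℝ)-1)) := by
          congr 2
          rw [Nat.cast_sub (by omega)]
          norm_num
  calc (lam^a)⁻¹ * (P*lam + (1-P))^(n-1)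
      ≤ Real.exp (-((a:ℝ) * Real.log lam)) * Real.exp (-(δ*P) * ((n:ℝ)-1)) := by
        rw [e1]
        apply mul_le_mul_of_nonneg_left e2 (by positivity)
    _ = Real.exp (-((a:ℝ) * Real.log lam) + -(δ*P) * ((n:ℝ)-1)) := by
        rw [← Real.exp_add]
    _ ≤ Real.exp (-(((n:ℝ)-1) * P * c)) := by
        apply Real.exp_le_exp.mpr
        have hloglam : Real.log lam ≤ 0 := Real.log_nonpos hlam0.le hlam1
        have key : (a:ℝ) * (- Real.log lam) ≤ (1-δ) * ((n:ℝ)-1) * P * (- Real.log lam) :=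
          mul_le_mul_of_nonneg_right ha (by linarith)
        rw [hc, hlam]
        rw [hlam] at key
        linarith

set_option maxHeartbeats 1000000

/-- Fix `ε > 0` and `η > 0`, and let `(p_n)` be a sequence with
`√((2+ε)·log n / n) ≤ p_n < 1/2` and `2·p_n·e^{1−2p_n} ≤ 1 − (2+η)·log n / n` for all
large `n`.  Then the expected number of Seymour vertices of `D(n, p_n)` satisfies
`E(S_n) = n − o(1)`, i.e. `n − E(S_n) → 0` as `n → ∞`. -/
theorem digraph_expected_seymour_n_sub_little_o (ε η : ℝ) (hε : 0 < ε) (hη : 0 < η)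
    (p : ℕ → ℝ)
    (hp : ∀ᶠ n : ℕ in Filter.atTop,
      Real.sqrt ((2 + ε) * Real.log n / n) ≤ p n ∧ p n < 1 / 2 ∧
        2 * p n * Real.exp (1 - 2 * p n) ≤ 1 - (2 + η) * Real.log n / n) :
    Filter.Tendsto (fun n : ℕ => (n : ℝ) - dES n (p n)) Filter.atTop (nhds 0) := by
  classical
  have hδ0 : 0 < ε / (2*(2+ε)) := by positivity
  have hδ1 : ε / (2*(2+ε)) < 1/2 := by
    rw [div_lt_iff₀ (by positivity)]
    nlinarith
  set δ : ℝ := ε / (2*(2+ε))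
  set lam : ℝ := 1 - δ with hlamdef
  set c : ℝ := δ + lam * Real.log lam with hcdef
  have hc0 : 0 < c := c_pos hδ0 (by linarith)
  set γ : ℝ := min 1 (min (ε/4) (η/4)) with hγdef
  have hγ0 : 0 < γ := by
    rw [hγdef]
    simp only [lt_min_iff]
    exact ⟨one_pos, by positivity, by positivity⟩
  have hγ1 : γ ≤ 1 := min_le_left _ _
  have hγε : γ ≤ ε/4 := le_trans (min_le_right _ _) (min_le_left _ _)
  have hγη : γ ≤ η/4 := le_trans (min_le_right _ _) (min_le_right _ _)
  -- eventual facts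
  have ev1 : ∀ᶠ n : ℕ in Filter.atTop, 1 ≤ Real.log n :=
    (Real.tendsto_log_atTop.comp
      (tendsto_natCast_atTop_atTop (R := ℝ))).eventually_ge_atTop 1
  have ev2 : ∀ᶠ n : ℕ in Filter.atTop, 16 * Real.log n ≤ c^2 * (n:ℝ) := by
    have hb := Real.isLittleO_log_id_atTop.bound (c := c^2/16) (by positivity)
    have h2 := (tendsto_natCast_atTop_atTop (R := ℝ)).eventually hb
    filter_upwards [h2, Filter.eventually_ge_atTop 1] with n hn hn1
    have hn1' : (1:ℝ) ≤ (n:ℝ) := by exact_mod_cast hn1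
    have hlog0 : 0 ≤ Real.log n := Real.log_nonneg hn1'
    simp only [Real.norm_eq_abs, id_eq] at hn
    rw [abs_of_nonneg hlog0, abs_of_nonneg (by linarith : (0:ℝ) ≤ (n:ℝ))] at hn
    calc 16 * Real.log n ≤ 16 * (c^2/16 * n) := by linarith
      _ = c^2 * (n:ℝ) := by ring
  have ev3 : ∀ᶠ n : ℕ in Filter.atTop, (8 + 2*ε)/ε ≤ (n:ℝ) :=
    (tendsto_natCast_atTop_atTop (R := ℝ)).eventually_ge_atTop _
  have ev4 : ∀ᶠ n : ℕ in Filter.atTop, 2*(2+η)/η ≤ (n:ℝ) :=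
    (tendsto_natCast_atTop_atTop (R := ℝ)).eventually_ge_atTop _
  have ev5 : ∀ᶠ n : ℕ in Filter.atTop, 2 ≤ n := Filter.eventually_ge_atTop 2
  have main : ∀ᶠ n : ℕ in Filter.atTop,
      0 ≤ (n : ℝ) - dES n (p n) ∧
        (n : ℝ) - dES n (p n) ≤ 3 * Real.exp (-(γ * Real.log n)) := by
    filter_upwards [hp, ev1, ev2, ev3, ev4, ev5] with n hpn hL1 h16 h8 h22 hn2
    obtain ⟨hP1, hP2, hP3⟩ := hpn
    have hL0 : (0:ℝ) < Real.log n := by linarith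
    have hnr : (2:ℝ) ≤ (n:ℝ) := by exact_mod_cast hn2
    have hn0 : (0:ℝ) < (n:ℝ) := by linarith
    have hP0 : 0 < p n := by
      have hx : (0:ℝ) < (2+ε) * Real.log n / n := by positivity
      calc (0:ℝ) < Real.sqrt ((2+ε) * Real.log n / n) := Real.sqrt_pos.mpr hx
        _ ≤ p n := hP1
    have hP1' : p n ≤ 1 := by linarith
    have hPsq : (2+ε) * Real.log n / n ≤ (p n)^2 := by
      have hx : (0:ℝ) ≤ (2+ε) * Real.log n / n := by positivity
      nlinarith [Real.sq_sqrt hx, Real.sqrt_nonneg ((2+ε) * Real.log n / n), hP1]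
    set a : ℕ := ⌊(1-δ) * ((n:ℝ)-1) * p n⌋₊ with hadef
    have hx0 : 0 ≤ (1-δ) * ((n:ℝ)-1) * p n := by
      apply mul_nonneg (mul_nonneg (by linarith) (by linarith)) hP0.le
    have haf : (a:ℝ) ≤ (1-δ) * ((n:ℝ)-1) * p n := Nat.floor_le hx0
    have haf1 : (1-δ) * ((n:ℝ)-1) * p n ≤ (a:ℝ) + 1 := (Nat.lt_floor_add_one _).le
    -- exponent bounds
    have hB2exp : (2 + ε/4) * Real.log n ≤ p n * ((a:ℝ)+1) :=
      helperB2 hε rfl hnr h8 hL0 hP0 hPsq haf1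
    have hB1exp : 2 * Real.log n ≤ ((n:ℝ)-1) * p n * c := by
      apply helperB1exp hc0 hnr hL0 h16
      refine le_trans ?_ hP1
      apply Real.sqrt_le_sqrt
      rw [div_le_div_iff₀ hn0 hn0]
      nlinarith [mul_nonneg (mul_nonneg hε.le hL0.le) hn0.le]
    have hB3exp : (1 + η/4) * Real.log n ≤ (1-2*p n)^2 * ((n:ℝ)-1) / 2 := by
      apply helperB3exp hη hnr h22 hL0 (by linarith) (by linarith)
      calc (1 - (1-2*p n)) * Real.exp (1-2*p n)
          = 2 * p n * Real.exp (1 - 2*p n) := by ring_nf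
        _ ≤ 1 - (2+η) * Real.log n / n := hP3
    have hexpL : (n:ℝ) = Real.exp (Real.log n) := (Real.exp_log hn0).symm
    -- ρ bounds
    have hρbound : (n:ℝ) * Real.exp (-(p n*((a:ℝ)+1)))
        ≤ Real.exp (-((1+ε/4) * Real.log n)) := by
      nth_rewrite 1 [hexpL]
      rw [← Real.exp_add]
      apply Real.exp_le_exp.mpr
      linarith
    have hρ1 : (n:ℝ) * Real.exp (-(p n*((a:ℝ)+1))) ≤ 1 := by
      refine hρbound.trans ?_
      apply Real.exp_le_one_iff.mpr
      have h5 : 0 < (1+ε/4) * Real.log n := by positivity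
      linarith
    have hB1 : (lam^a)⁻¹ * (p n*lam + (1-p n))^(n-1)
        ≤ Real.exp (-(((n:ℝ)-1) * p n * c)) :=
      helperB1 n a hn2 hδ0 hδ1 hlamdef hcdef hP0 hP2 haf
    -- assemble
    have hvb : ∀ v : Fin n, dPr (p n) {ω : DOmega n | ¬ dSeymour ω v}
        ≤ (lam^a)⁻¹ * (p n*lam + (1-p n))^(n-1)
          + (n:ℝ) * Real.exp (-(p n*((a:ℝ)+1)))
          + Real.exp (-(1-2*p n)^2*((n:ℝ)-1)/2) := by
      intro v
      refine (vertex_bound hP0.le hP1' v a).trans ?_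
      exact sum_bound hn2 hP0 hP2 (by linarith : (0:ℝ) < lam)
        (by rw [hlamdef]; linarith) a hρ1
    have htotal : (n : ℝ) - dES n (p n) = ∑ v : Fin n, dPr (p n) {ω | ¬ dSeymour ω v} :=
      n_sub_dES hP0.le hP1'
    constructor
    · rw [htotal]
      exact Finset.sum_nonneg fun v _ => dPr_nonneg hP0.le hP1' _
    · rw [htotal]
      have hsum : ∑ v : Fin n, dPr (p n) {ω : DOmega n | ¬ dSeymour ω v}
          ≤ (n:ℝ) * ((lam^a)⁻¹ * (p n*lam + (1-p n))^(n-1)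
            + (n:ℝ) * Real.exp (-(p n*((a:ℝ)+1)))
            + Real.exp (-(1-2*p n)^2*((n:ℝ)-1)/2)) := by
        calc ∑ v : Fin n, dPr (p n) {ω : DOmega n | ¬ dSeymour ω v}
            ≤ ∑ _v : Fin n, ((lam^a)⁻¹ * (p n*lam + (1-p n))^(n-1)
              + (n:ℝ) * Real.exp (-(p n*((a:ℝ)+1)))
              + Real.exp (-(1-2*p n)^2*((n:ℝ)-1)/2)) :=
              Finset.sum_le_sum fun v _ => hvb v
          _ = (n:ℝ) * _ := by
              rw [Finset.sum_const, Finset.card_univ, Fintype.card_fin, nsmul_eq_mul]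
      refine hsum.trans ?_
      have e1 : (n:ℝ) * ((lam^a)⁻¹ * (p n*lam + (1-p n))^(n-1))
          ≤ Real.exp (-(γ * Real.log n)) := by
        calc (n:ℝ) * ((lam^a)⁻¹ * (p n*lam + (1-p n))^(n-1))
            ≤ (n:ℝ) * Real.exp (-(((n:ℝ)-1) * p n * c)) := by
              apply mul_le_mul_of_nonneg_left hB1 hn0.le
          _ = Real.exp (Real.log n - ((n:ℝ)-1) * p n * c) := by
              nth_rewrite 1 [hexpL]
              rw [← Real.exp_add]
              ring_nf
          _ ≤ Real.exp (-(γ * Real.log n)) := by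
              apply Real.exp_le_exp.mpr
              linarith [hB1exp, mul_le_mul_of_nonneg_right hγ1 hL0.le]
      have e2 : (n:ℝ) * ((n:ℝ) * Real.exp (-(p n*((a:ℝ)+1))))
          ≤ Real.exp (-(γ * Real.log n)) := by
        calc (n:ℝ) * ((n:ℝ) * Real.exp (-(p n*((a:ℝ)+1))))
            ≤ (n:ℝ) * Real.exp (-((1+ε/4) * Real.log n)) :=
              mul_le_mul_of_nonneg_left hρbound hn0.le
          _ = Real.exp (Real.log n - (1+ε/4) * Real.log n) := by
              nth_rewrite 1 [hexpL]
              rw [← Real.exp_add]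
              ring_nf
          _ ≤ Real.exp (-(γ * Real.log n)) := by
              apply Real.exp_le_exp.mpr
              linarith [mul_le_mul_of_nonneg_right hγε hL0.le]
      have e3 : (n:ℝ) * Real.exp (-(1-2*p n)^2*((n:ℝ)-1)/2)
          ≤ Real.exp (-(γ * Real.log n)) := by
        calc (n:ℝ) * Real.exp (-(1-2*p n)^2*((n:ℝ)-1)/2)
            ≤ (n:ℝ) * Real.exp (-((1+η/4) * Real.log n)) := by
              apply mul_le_mul_of_nonneg_left _ hn0.le
              apply Real.exp_le_exp.mpr
              linarith [hB3exp]
          _ = Real.exp (Real.log n - (1+η/4) * Real.log n) := by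
              nth_rewrite 1 [hexpL]
              rw [← Real.exp_add]
              ring_nf
          _ ≤ Real.exp (-(γ * Real.log n)) := by
              apply Real.exp_le_exp.mpr
              linarith [mul_le_mul_of_nonneg_right hγη hL0.le]
      calc (n:ℝ) * ((lam^a)⁻¹ * (p n*lam + (1-p n))^(n-1)
            + (n:ℝ) * Real.exp (-(p n*((a:ℝ)+1)))
            + Real.exp (-(1-2*p n)^2*((n:ℝ)-1)/2))
          = (n:ℝ) * ((lam^a)⁻¹ * (p n*lam + (1-p n))^(n-1))
            + (n:ℝ) * ((n:ℝ) * Real.exp (-(p n*((a:ℝ)+1))))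
            + (n:ℝ) * Real.exp (-(1-2*p n)^2*((n:ℝ)-1)/2) := by ring
        _ ≤ 3 * Real.exp (-(γ * Real.log n)) := by linarith
  -- conclude by squeeze
  have hb : Filter.Tendsto (fun n : ℕ => 3 * Real.exp (-(γ * Real.log n)))
      Filter.atTop (nhds 0) := by
    have h1 : Filter.Tendsto (fun x : ℝ => γ * Real.log x) Filter.atTop Filter.atTop :=
      Real.tendsto_log_atTop.const_mul_atTop hγ0
    have h2 : Filter.Tendsto (fun n : ℕ => γ * Real.log n) Filter.atTop Filter.atTop :=
      h1.comp (tendsto_natCast_atTop_atTop (R := ℝ))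
    have h3 : Filter.Tendsto (fun n : ℕ => Real.exp (-(γ * Real.log n)))
        Filter.atTop (nhds 0) :=
      Real.tendsto_exp_atBot.comp (Filter.tendsto_neg_atTop_atBot.comp h2)
    simpa using h3.const_mul 3
  refine tendsto_of_tendsto_of_tendsto_of_le_of_le' tendsto_const_nhds hb
    (main.mono fun n h => h.1) (main.mono fun n h => h.2)
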